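/- Let 𝔛 and 𝔜 be finite-dimensional Hilbert spaces, A ∈ B(𝔜) and B ∈ B(𝔛) self-adjoint operators whose spectra are not interlaced, i.e., sup Spec(A) < inf Spec(B) or sup Spec(B) < inf Spec(A). Then for any V ∈ B(𝔛,𝔜), the unique solution W of AW − WB = V satisfies ‖W‖ ≤ ‖V‖ / dist(Spec(A), Spec(B)). -/

import Mathlib

set_option maxHeartbeats 1000000

open ContinuousLinearMap

theorem core7 {X Y : Type*}
    [NormedAddCommGroup X] [InnerProductSpace ℂ X] [FiniteDimensional ℂ X]
    [NormedAddCommGroup Y] [InnerProductSpace ℂ Y] [FiniteDimensional ℂ Y]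
    [Nontrivial X] [Nontrivial Y]
    (A : Y →L[ℂ] Y) (B : X →L[ℂ] X) (hA : IsSelfAdjoint A) (hB : IsSelfAdjoint B)
    (hsep : ∀ a ∈ spectrum ℂ A, ∀ b ∈ spectrum ℂ B, b.re < a.re)
    (V W : X →L[ℂ] Y) (hW : A ∘L W - W ∘L B = V) :
    ‖W‖ ≤ ‖V‖ / sInf {r : ℝ | ∃ a ∈ spectrum ℂ A, ∃ b ∈ spectrum ℂ B, r = dist a b} := by
  haveI : Nontrivial (Y →L[ℂ] Y) := by
    obtain ⟨y, hy⟩ := exists_ne (0 : Y)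
    exact ⟨1, 0, fun h => hy (by simpa using DFunLike.congr_fun h y)⟩
  haveI : Nontrivial (X →L[ℂ] X) := by
    obtain ⟨x, hx⟩ := exists_ne (0 : X)
    exact ⟨1, 0, fun h => hx (by simpa using DFunLike.congr_fun h x)⟩
  have himA : algebraMap ℝ ℂ '' spectrum ℝ A = spectrum ℂ A :=
    hA.spectrumRestricts.algebraMap_image
  have himB : algebraMap ℝ ℂ '' spectrum ℝ B = spectrum ℂ B :=
    hB.spectrumRestricts.algebraMap_image
  have hneA : (spectrum ℝ A).Nonempty := by
    have := spectrum.nonempty A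
    rw [← himA] at this
    exact this.of_image
  have hneB : (spectrum ℝ B).Nonempty := by
    have := spectrum.nonempty B
    rw [← himB] at this
    exact this.of_image
  have hcA : IsCompact (spectrum ℝ A) := spectrum.isCompact A
  have hcB : IsCompact (spectrum ℝ B) := spectrum.isCompact B
  set α := sInf (spectrum ℝ A) with hαdef
  set β := sSup (spectrum ℝ B) with hβdef
  have hαmem : α ∈ spectrum ℝ A := hcA.sInf_mem hneA
  have hβmem : β ∈ spectrum ℝ B := hcB.sSup_mem hneB
  have hαle : ∀ x ∈ spectrum ℝ A, α ≤ x := fun x hx => csInf_le hcA.bddBelow hx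
  have hβge : ∀ x ∈ spectrum ℝ B, x ≤ β := fun x hx => le_csSup hcB.bddAbove hx
  have hβα : β < α := by
    have := hsep (algebraMap ℝ ℂ α) (himA ▸ Set.mem_image_of_mem _ hαmem)
      (algebraMap ℝ ℂ β) (himB ▸ Set.mem_image_of_mem _ hβmem)
    simpa using this
  -- the distance set
  set S := {r : ℝ | ∃ a ∈ spectrum ℂ A, ∃ b ∈ spectrum ℂ B, r = dist a b} with hSdef
  have hSmem : α - β ∈ S := by
    refine ⟨algebraMap ℝ ℂ α, himA ▸ Set.mem_image_of_mem _ hαmem,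
      algebraMap ℝ ℂ β, himB ▸ Set.mem_image_of_mem _ hβmem, ?_⟩
    simp only [Complex.coe_algebraMap, Complex.dist_eq, ← Complex.ofReal_sub,
      Complex.norm_real, Real.norm_eq_abs]
    rw [abs_of_pos (by linarith)]
  have hSlb : ∀ r ∈ S, α - β ≤ r := by
    rintro r ⟨a, ha, b, hb, rfl⟩
    obtain ⟨x, hx, rfl⟩ := himA ▸ ha
    obtain ⟨y, hy, rfl⟩ := himB ▸ hb
    simp only [Complex.coe_algebraMap, Complex.dist_eq, ← Complex.ofReal_sub,
      Complex.norm_real, Real.norm_eq_abs]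
    have := hαle x hx
    have := hβge y hy
    rw [abs_of_pos (by linarith)]
    linarith
  have hd : sInf S = α - β := le_antisymm (csInf_le ⟨α - β, hSlb⟩ hSmem)
    (le_csInf ⟨_, hSmem⟩ hSlb)
  -- the analytic bound
  set m := min β (-‖B‖) with hmdef
  have hmβ : m ≤ β := min_le_left _ _
  have hmB : ∀ x ∈ spectrum ℝ B, m ≤ x := fun x hx => by
    have h1 : ‖x‖ ≤ ‖B‖ := spectrum.norm_le_norm_of_mem hx
    have := abs_le.mp (Real.norm_eq_abs x ▸ h1)
    exact le_trans (min_le_right _ _) this.1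
  have hmα : m < α := lt_of_le_of_lt hmβ hβα
  have hmA : ∀ x ∈ spectrum ℝ A, m < x := fun x hx => lt_of_lt_of_le hmα (hαle x hx)
  set A' := A - algebraMap ℝ (Y →L[ℂ] Y) m with hA'def
  set B' := B - algebraMap ℝ (X →L[ℂ] X) m with hB'def
  set R := cfc (fun x : ℝ => (x - m)⁻¹) A with hRdef
  have hcfcA : cfc (fun x : ℝ => x - m) A = A' := by
    rw [cfc_sub _ _ A (by fun_prop) (by fun_prop), cfc_id' ℝ A, cfc_const m A]
  have hcfcB : cfc (fun x : ℝ => x - m) B = B' := by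
    rw [cfc_sub _ _ B (by fun_prop) (by fun_prop), cfc_id' ℝ B, cfc_const m B]
  have hR1 : R * A' = 1 := by
    rw [← hcfcA, hRdef]
    have h1 : ContinuousOn (fun x : ℝ => (x - m)⁻¹) (spectrum ℝ A) :=
      ContinuousOn.inv₀ (by fun_prop) fun x hx => sub_ne_zero.mpr (hmA x hx).ne'
    rw [← cfc_mul _ _ A h1 (by fun_prop), ← cfc_one (R := ℝ) A]
    exact cfc_congr fun x hx => by rw [Pi.one_apply]; field_simp [sub_ne_zero.mpr (hmA x hx).ne']
  have hRn : ‖R‖ ≤ (α - m)⁻¹ := by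
    refine norm_cfc_le (inv_nonneg.mpr (by linarith)) fun x hx => ?_
    rw [Real.norm_eq_abs, abs_of_pos (inv_pos.mpr (by have := hmA x hx; linarith))]
    exact inv_anti₀ (by linarith) (by have := hαle x hx; linarith)
  have hBn : ‖B'‖ ≤ β - m := by
    rw [← hcfcB]
    refine norm_cfc_le (by linarith) fun x hx => ?_
    rw [Real.norm_eq_abs, abs_le]
    constructor
    · have := hmB x hx; linarith
    · have := hβge x hx; linarith
  have heq : A' ∘L W - W ∘L B' = V := by
    rw [← hW]
    ext x
    simp [hA'def, hB'def, Algebra.algebraMap_eq_smul_one, sub_comp, comp_sub]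
  have hWeq : W = R ∘L (V + W ∘L B') := by
    have h2 : A' ∘L W = V + W ∘L B' := by rw [← heq]; abel
    calc W = (R * A') ∘L W := by rw [hR1, one_def, id_comp]
    _ = R ∘L (A' ∘L W) := by rw [mul_def, comp_assoc]
    _ = R ∘L (V + W ∘L B') := by rw [h2]
  have hnorm : ‖W‖ ≤ (α - m)⁻¹ * (‖V‖ + ‖W‖ * (β - m)) := by
    calc ‖W‖ = ‖R ∘L (V + W ∘L B')‖ := by rw [← hWeq]
    _ ≤ ‖R‖ * ‖V + W ∘L B'‖ := opNorm_comp_le _ _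
    _ ≤ ‖R‖ * (‖V‖ + ‖W‖ * ‖B'‖) := by
        refine mul_le_mul_of_nonneg_left ?_ (norm_nonneg R)
        exact le_trans (norm_add_le _ _) (by gcongr; exact opNorm_comp_le _ _)
    _ ≤ (α - m)⁻¹ * (‖V‖ + ‖W‖ * (β - m)) := by
        refine mul_le_mul hRn (add_le_add le_rfl ?_) (by positivity)
          (inv_nonneg.mpr (by linarith))
        exact mul_le_mul_of_nonneg_left hBn (norm_nonneg W)
  have hkey : (α - β) * ‖W‖ ≤ ‖V‖ := by
    have hαm : (0:ℝ) < α - m := by linarith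
    have h3 := mul_le_mul_of_nonneg_left hnorm hαm.le
    rw [← mul_assoc, mul_inv_cancel₀ hαm.ne', one_mul] at h3
    nlinarith [norm_nonneg W]
  rw [hd]
  rw [le_div_iff₀ (show (0:ℝ) < α - β by linarith)]
  nlinarith [hkey]

/-- for self-adjoint A, B on finite-dimensional Hilbert spaces whose
spectra are not interlaced (one lies entirely strictly below the other), the
Sylvester equation AW − WB = V has a unique solution, and any solution satisfies
‖W‖ ≤ ‖V‖ / dist(Spec A, Spec B). -/
theorem stmt_7 {X Y : Type*}
    [NormedAddCommGroup X] [InnerProductSpace ℂ X] [FiniteDimensional ℂ X]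
    [NormedAddCommGroup Y] [InnerProductSpace ℂ Y] [FiniteDimensional ℂ Y]
    (A : Y →L[ℂ] Y) (B : X →L[ℂ] X) (hA : IsSelfAdjoint A) (hB : IsSelfAdjoint B)
    (hsep : (∀ a ∈ spectrum ℂ A, ∀ b ∈ spectrum ℂ B, a.re < b.re) ∨
            (∀ a ∈ spectrum ℂ A, ∀ b ∈ spectrum ℂ B, b.re < a.re))
    (V : X →L[ℂ] Y) :
    (∃! W : X →L[ℂ] Y, A ∘L W - W ∘L B = V) ∧
    ∀ W : X →L[ℂ] Y, A ∘L W - W ∘L B = V →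
      ‖W‖ ≤ ‖V‖ /
        sInf {r : ℝ | ∃ a ∈ spectrum ℂ A, ∃ b ∈ spectrum ℂ B, r = dist a b} := by
  have hbound : ∀ V W : X →L[ℂ] Y, A ∘L W - W ∘L B = V →
      ‖W‖ ≤ ‖V‖ / sInf {r : ℝ | ∃ a ∈ spectrum ℂ A, ∃ b ∈ spectrum ℂ B, r = dist a b} := by
    rcases subsingleton_or_nontrivial X with hX | hX
    · intro V W _
      have hW0 : W = 0 := by ext x; rw [Subsingleton.elim x (0 : X)]; simp
      have hV0 : V = 0 := by ext x; rw [Subsingleton.elim x (0 : X)]; simp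
      rw [hW0, hV0]
      simp
    rcases subsingleton_or_nontrivial Y with hY | hY
    · intro V W _
      have hW0 : W = 0 := by ext x; exact Subsingleton.elim _ _
      have hV0 : V = 0 := by ext x; exact Subsingleton.elim _ _
      rw [hW0, hV0]
      simp
    rcases hsep with h | h
    · intro V W hW
      have h' : ∀ a ∈ spectrum ℂ B, ∀ b ∈ spectrum ℂ A, b.re < a.re := fun a ha b hb =>
        h b hb a ha
      have hWadj : B ∘L (ContinuousLinearMap.adjoint W) -
          (ContinuousLinearMap.adjoint W) ∘L A = -(ContinuousLinearMap.adjoint V) := by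
        have h2 := congrArg (fun U : X →L[ℂ] Y => ContinuousLinearMap.adjoint U) hW
        simp only [map_sub, adjoint_comp] at h2
        rw [← star_eq_adjoint A, ← star_eq_adjoint B, hA.star_eq, hB.star_eq] at h2
        rw [← h2]; abel
      have hcore := core7 B A hB hA h' (-(ContinuousLinearMap.adjoint V))
        (ContinuousLinearMap.adjoint W) hWadj
      have hSeq : {r : ℝ | ∃ a ∈ spectrum ℂ B, ∃ b ∈ spectrum ℂ A, r = dist a b} =
          {r : ℝ | ∃ a ∈ spectrum ℂ A, ∃ b ∈ spectrum ℂ B, r = dist a b} := by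
        ext r
        constructor <;> rintro ⟨a, ha, b, hb, rfl⟩
        exacts [⟨b, hb, a, ha, dist_comm a b⟩, ⟨b, hb, a, ha, dist_comm a b⟩]
      rw [hSeq, norm_neg, LinearIsometryEquiv.norm_map, LinearIsometryEquiv.norm_map] at hcore
      exact hcore
    · exact fun V W hW => core7 A B hA hB h V W hW
  have hker : ∀ W : X →L[ℂ] Y, A ∘L W - W ∘L B = 0 → W = 0 := fun W h0 => by
    have := hbound 0 W h0
    rw [norm_zero, zero_div] at this
    exact norm_le_zero_iff.mp this
  refine ⟨?_, fun W hW => hbound V W hW⟩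
  have hdiff : ∀ W₁ W₂ : X →L[ℂ] Y, A ∘L (W₁ - W₂) - (W₁ - W₂) ∘L B =
      (A ∘L W₁ - W₁ ∘L B) - (A ∘L W₂ - W₂ ∘L B) := by
    intro W₁ W₂
    rw [comp_sub, sub_comp]
    abel
  let T : (X →L[ℂ] Y) →ₗ[ℂ] (X →L[ℂ] Y) :=
    { toFun := fun W => A ∘L W - W ∘L B
      map_add' := fun W₁ W₂ => by ext x; simp; abel
      map_smul' := fun c W => by ext x; simp [smul_sub] }
  have hinj : Function.Injective T := fun W₁ W₂ h12 => by
    have h0 : A ∘L (W₁ - W₂) - (W₁ - W₂) ∘L B = 0 := by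
      rw [hdiff W₁ W₂]
      show T W₁ - T W₂ = 0
      rw [h12, sub_self]
    have := hker _ h0
    rwa [sub_eq_zero] at this
  obtain ⟨W, hW⟩ := (LinearMap.injective_iff_surjective).mp hinj V
  refine ⟨W, hW, fun W' hW' => ?_⟩
  have h0 : A ∘L (W' - W) - (W' - W) ∘L B = 0 := by
    rw [hdiff W' W, hW', show A ∘L W - W ∘L B = V from hW, sub_self]
  have := hker _ h0
  rwa [sub_eq_zero] at this
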